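/- arXiv:2302.04444 — 3 statements merged into one kernel-verified Lean document; each statement's English description precedes it below -/
import Mathlib

section
/- Let Γ be a weighted graph. The map sending σ ∈ Aut(Γ) to the unique automorphism α ∈ A_Γ with α(e) = e and constant local action σ(α,v) = σ for all vertices v is a group isomorphism from Aut(Γ) onto the subgroup of A_Γ consisting of almost translations that fix the identity vertex e. -/
/-!
Setup for Cayley graphs of Coxeter groups.

A weighted graph `Γ = (VΓ, EΓ, m)` in the sense of the paper is encoded by a Mathlib
`CoxeterMatrix B` (`B = VΓ`): the weight `m x y` is `M x y`, where the entry `0` encodes `∞`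
(no relation / no edge).  The associated Coxeter group is `M.Group`, with standard generators
`M.simple x`.
-/

open CoxeterMatrix

variable {B : Type*}

/-- The automorphism group of a simple graph, as a subgroup of the permutation group
of its vertex set. -/
def graphAut {V : Type*} (G : SimpleGraph V) : Subgroup (Equiv.Perm V) where
  carrier := {σ | ∀ x y : V, G.Adj (σ x) (σ y) ↔ G.Adj x y}
  one_mem' := by intro x y; simp
  mul_mem' := by
    intro a b ha hb x y
    simpa [Equiv.Perm.mul_apply] using (ha (b x) (b y)).trans (hb x y)
  inv_mem' := by
    intro a ha x y
    simpa using (ha (a⁻¹ x) (a⁻¹ y)).symm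

/-- The group `Aut(Γ)` of weight-preserving automorphisms of the weighted graph encoded by the
Coxeter matrix `M`, as a subgroup of the permutation group of the vertex set. -/
def wAut (M : CoxeterMatrix B) : Subgroup (Equiv.Perm B) where
  carrier := {σ | ∀ x y : B, M (σ x) (σ y) = M x y}
  one_mem' := by intro x y; simp
  mul_mem' := by
    intro a b ha hb x y
    simpa [Equiv.Perm.mul_apply] using (ha (b x) (b y)).trans (hb x y)
  inv_mem' := by
    intro a ha x y
    simpa using (ha (a⁻¹ x) (a⁻¹ y)).symm

/-- The simplicial graph underlying a weighted graph (Coxeter matrix): distinct vertices `x, y`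
are adjacent iff the weight `M x y` is finite (recall that the entry `0` encodes `∞`). -/
def cGraph (M : CoxeterMatrix B) : SimpleGraph B where
  Adj x y := x ≠ y ∧ M x y ≠ 0
  symm := by
    constructor
    rintro x y ⟨h1, h2⟩
    exact ⟨h1.symm, by rwa [M.symmetric y x]⟩
  loopless := ⟨fun x h => h.1 rfl⟩

/-- The star of a vertex `x`: the vertex together with all its neighbours. -/
def starSet (M : CoxeterMatrix B) (x : B) : Set B := insert x ((cGraph M).neighborSet x)

/-- The Cayley graph `C_Γ` of the Coxeter group `W_Γ = M.Group` with respect to the standard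
generating set: `v` and `w` are adjacent iff `w = v * (M.simple x)` for some generator `x`
(the edge `{v, v * M.simple x}` is labelled by `x`). -/
def cayley (M : CoxeterMatrix B) : SimpleGraph M.Group where
  Adj v w := v ≠ w ∧ ∃ x : B, w = v * M.simple x
  symm := by
    constructor
    rintro v w ⟨hne, x, rfl⟩
    refine ⟨hne.symm, x, ?_⟩
    have h : M.simple x * M.simple x = 1 := M.toCoxeterSystem.simple_mul_simple_self x
    rw [mul_assoc, h, mul_one]
  loopless := ⟨fun v h => h.1 rfl⟩

/-- `τ : VΓ → VΓ` is the local action `σ(α, v)` of the (Cayley graph automorphism) `α` at the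
vertex `v`: for each generator `x`, `α` maps the edge `{v, v·x}` (labelled `x`) to the edge
`{α v, (α v)·(τ x)}` (labelled `τ x`). -/
def IsLocalAction (M : CoxeterMatrix B) (α : Equiv.Perm M.Group) (v : M.Group)
    (τ : B → B) : Prop :=
  ∀ x : B, α (v * M.simple x) = α v * M.simple (τ x)

/-- `Γ₁` is a factor associated with the separating set `S ⊊ VΓ`: the induced subgraph on
`VΓ ∖ S` is disconnected, and `Γ₁` is the union of `S` with a nonempty collection `C` of
connected components of `VΓ ∖ S` which omits at least one component (so `C` is a nonempty
union of components, closed under reachability, with nonempty complement in `VΓ ∖ S`). -/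
def IsFactor (M : CoxeterMatrix B) (S : Set B) (Γ₁ : Set B) : Prop :=
  S ≠ Set.univ ∧ ¬ ((cGraph M).induce Sᶜ).Connected ∧
  ∃ C : Set B, Γ₁ = S ∪ C ∧ C ⊆ Sᶜ ∧ C.Nonempty ∧ (Sᶜ \ C).Nonempty ∧
    (∀ x y : ↥(Sᶜ), ((cGraph M).induce Sᶜ).Reachable x y → (x : B) ∈ C → (y : B) ∈ C)

/-- `S` is a good separating set: some factor `Γ₁` associated with `S` carries a nontrivial
weight-preserving automorphism restricting to the identity on `S`. -/
def IsGoodSepSet (M : CoxeterMatrix B) (S : Set B) : Prop :=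
  ∃ Γ₁ : Set B, IsFactor M S Γ₁ ∧
    ∃ σ : Equiv.Perm ↥Γ₁, σ ≠ 1 ∧ (∀ a b : ↥Γ₁, M ((σ a : B)) ((σ b : B)) = M (a : B) (b : B)) ∧
      (∀ a : ↥Γ₁, (a : B) ∈ S → σ a = a)

/-- The permutation topology on a group of permutations of `V` (e.g. the automorphism group of a
graph with vertex set `V`): the topology of pointwise convergence, i.e. the topology induced from
the product topology on `V → V` where each factor carries the discrete topology.  Its basic open
neighbourhoods of the identity are the pointwise stabilisers of finite subsets of `V`. -/
def permTop {V : Type*} (H : Subgroup (Equiv.Perm V)) : TopologicalSpace ↥H :=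
  TopologicalSpace.induced (fun α => ((α : Equiv.Perm V) : V → V))
    (@Pi.topologicalSpace V (fun _ => V) (fun _ => ⊥))

open Classical in
/-- The weighted graph (Coxeter matrix) of a right-angled weighted graph: all edges of the
simplicial graph `G` get weight `2`. -/
noncomputable def ofGraph {V : Type*} (G : SimpleGraph V) : CoxeterMatrix V where
  M := Matrix.of fun x y => if x = y then 1 else if G.Adj x y then 2 else 0
  isSymm := by
    ext x y
    by_cases h : x = y
    · simp [Matrix.IsSymm, h]
    · simp only [Matrix.transpose_apply, Matrix.of_apply, if_neg h, if_neg (Ne.symm h)]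
      rw [G.adj_comm]
  diagonal i := by simp
  off_diagonal i j h := by
    simp only [Matrix.of_apply, if_neg h]
    split_ifs <;> simp

noncomputable section AuxRep
open Complex

private def ceps (m : ℕ) : ℂ := Complex.exp (Real.pi * Complex.I / m)

private def ccoef (m : ℕ) : ℂ := if m = 0 then -1 else -(ceps m + (ceps m)⁻¹) / 2

private lemma ceps_ne_zero (m : ℕ) : ceps m ≠ 0 := Complex.exp_ne_zero _

private lemma ceps_pow_self {m : ℕ} (hm : m ≠ 0) : ceps m ^ m = -1 := by
  rw [ceps, ← Complex.exp_nat_mul, mul_div_cancel₀, Complex.exp_pi_mul_I]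
  exact_mod_cast hm

private lemma ceps_pow_two_mul_eq_one_iff {m : ℕ} (hm : m ≠ 0) (n : ℕ) :
    ceps m ^ (2 * n) = 1 ↔ m ∣ n := by
  have hm' : (m : ℂ) ≠ 0 := by exact_mod_cast hm
  have h2πI : (2 : ℂ) * Real.pi * I ≠ 0 := by
    simp [Complex.I_ne_zero, Complex.ofReal_ne_zero, Real.pi_ne_zero]
  rw [ceps, ← Complex.exp_nat_mul, Complex.exp_eq_one_iff]
  constructor
  · rintro ⟨k, hk⟩
    have hnc : (n : ℂ) = k * m := by
      have h := mul_right_cancel₀ (b := (2 : ℂ) * Real.pi * I) (a := (n : ℂ)) (c := (k : ℂ) * m) h2πI ?_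
      · exact h
      · have hk' := congrArg (fun z : ℂ => z * m) hk
        field_simp at hk'
        push_cast at hk' ⊢
        linear_combination (↑Real.pi * I) * hk'
    have hnz : (n : ℤ) = k * m := by exact_mod_cast hnc
    have : (m : ℤ) ∣ (n : ℤ) := ⟨k, by linarith⟩
    exact_mod_cast this
  · rintro ⟨t, rfl⟩
    refine ⟨t, ?_⟩
    field_simp
    push_cast
    ring

open CoxeterSystem

variable {B : Type*} (M : CoxeterMatrix B)

private lemma ccoef_one : ccoef 1 = 1 := by
  have h : ceps 1 = -1 := by
    simp [ceps]
  norm_num [ccoef, h]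

private lemma ccoef_zero : ccoef 0 = -1 := by simp [ccoef]

private lemma two_mul_ccoef {m : ℕ} (hm : m ≠ 0) :
    2 * ccoef m = -(ceps m + (ceps m)⁻¹) := by
  rw [ccoef, if_neg hm]; ring

private def bform (i : B) : (B →₀ ℂ) →ₗ[ℂ] ℂ :=
  Finsupp.linearCombination ℂ (fun j => ccoef (M i j))

private def crefl (i : B) : Module.End ℂ (B →₀ ℂ) :=
  LinearMap.id - (bform M i).smulRight ((2 : ℂ) • Finsupp.single i 1)

private lemma crefl_apply (i : B) (v : B →₀ ℂ) :
    crefl M i v = v - (2 * bform M i v) • Finsupp.single i 1 := by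
  simp [crefl, smul_smul, mul_comm]

private lemma bform_single (i k : B) :
    bform M i (Finsupp.single k 1) = ccoef (M i k) := by
  simp [bform, Finsupp.linearCombination_single]

private lemma bform_single_self (i : B) : bform M i (Finsupp.single i 1) = 1 := by
  rw [bform_single, M.diagonal, ccoef_one]

private lemma crefl_fix {i : B} {v : B →₀ ℂ} (h : bform M i v = 0) :
    crefl M i v = v := by
  rw [crefl_apply, h]; simp

private lemma crefl_crefl (i : B) (v : B →₀ ℂ) :
    crefl M i (crefl M i v) = v := by
  rw [crefl_apply, crefl_apply]
  rw [map_sub, map_smul, bform_single_self]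
  rw [smul_eq_mul, mul_one]
  module

private lemma end_pow_fix {V : Type*} [AddCommMonoid V] [Module ℂ V]
    {g : Module.End ℂ V} {v : V} (h : g v = v) (n : ℕ) : (g ^ n) v = v := by
  induction n with
  | zero => simp
  | succ n ih => rw [pow_succ', Module.End.mul_apply, ih, h]

private lemma crefl_mul_apply (i j : B) (v : B →₀ ℂ) :
    (crefl M i * crefl M j) v = crefl M i (crefl M j v) := rfl

/-- eigenvector computation -/
private lemma g_eigen {i j : B} (hij : i ≠ j) {δ η : ℂ} (hδη : δ * η = 1)
    (hsum : δ + η = -(2 * ccoef (M i j))) :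
    (crefl M i * crefl M j) (Finsupp.single i 1 + δ • Finsupp.single j 1) =
      η ^ 2 • (Finsupp.single i 1 + δ • Finsupp.single j 1) := by
  set c := ccoef (M i j) with hc
  have hji : ccoef (M j i) = c := by rw [hc, M.symmetric]
  rw [crefl_mul_apply, crefl_apply, crefl_apply]
  simp only [map_add, map_sub, map_smul, bform_single_self, bform_single, hji, ← hc,
    smul_eq_mul]
  match_scalars
  · linear_combination hδη + (2 * c - η) * hsum
  · linear_combination (-η) * hδη + (-1) * hsum

section Pair

private lemma eigen_cond₁ (i j : B) :
    (ceps (M i j))⁻¹ * ceps (M i j) = 1 := inv_mul_cancel₀ (ceps_ne_zero _)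

private lemma eigen_cond₂ {i j : B} (hm0 : M i j ≠ 0) :
    (ceps (M i j))⁻¹ + ceps (M i j) = -(2 * ccoef (M i j)) := by
  rw [two_mul_ccoef hm0]; ring

private lemma eigen_cond₁' (i j : B) :
    ceps (M i j) * (ceps (M i j))⁻¹ = 1 := mul_inv_cancel₀ (ceps_ne_zero _)

private lemma eigen_cond₂' {i j : B} (hm0 : M i j ≠ 0) :
    ceps (M i j) + (ceps (M i j))⁻¹ = -(2 * ccoef (M i j)) := by
  rw [two_mul_ccoef hm0]; ring

private lemma g_pow_eigen {i j : B} (hij : i ≠ j) {δ η : ℂ} (hδη : δ * η = 1)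
    (hsum : δ + η = -(2 * ccoef (M i j))) (n : ℕ) :
    ((crefl M i * crefl M j) ^ n) (Finsupp.single i 1 + δ • Finsupp.single j 1) =
      (η ^ 2) ^ n • (Finsupp.single i 1 + δ • Finsupp.single j 1) := by
  induction n with
  | zero => simp
  | succ n ih =>
    rw [pow_succ', Module.End.mul_apply, ih, map_smul, g_eigen M hij hδη hsum,
      smul_smul, pow_succ']
    ring_nf

private lemma eps_sq_pow {i j : B} (hm0 : M i j ≠ 0) :
    (ceps (M i j) ^ 2) ^ (M i j) = 1 := by
  rw [← pow_mul, mul_comm, pow_mul, ceps_pow_self hm0]; norm_num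

private lemma eps_inv_sq_pow {i j : B} (hm0 : M i j ≠ 0) :
    ((ceps (M i j))⁻¹ ^ 2) ^ (M i j) = 1 := by
  rw [inv_pow, inv_pow, eps_sq_pow M hm0, inv_one]

private lemma eps_sub_ne {i j : B} (hm0 : M i j ≠ 0) (hm1 : M i j ≠ 1) :
    ceps (M i j) - (ceps (M i j))⁻¹ ≠ 0 := by
  intro h
  have h1 : ceps (M i j) = (ceps (M i j))⁻¹ := sub_eq_zero.mp h
  have h2 : ceps (M i j) ^ (2 * 1) = 1 := by
    rw [pow_mul, pow_one, sq]
    nth_rw 2 [h1]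
    exact mul_inv_cancel₀ (ceps_ne_zero _)
  exact hm1 (Nat.dvd_one.mp ((ceps_pow_two_mul_eq_one_iff hm0 1).mp h2))

private lemma gm_fix_j {i j : B} (hij : i ≠ j) (hm0 : M i j ≠ 0) (hm1 : M i j ≠ 1) :
    ((crefl M i * crefl M j) ^ (M i j)) (Finsupp.single j 1) = Finsupp.single j 1 := by
  set ε := ceps (M i j) with hε
  have h1 := g_pow_eigen M hij (eigen_cond₁ M i j) (eigen_cond₂ M hm0) (M i j)
  have h2 := g_pow_eigen M hij (eigen_cond₁' M i j) (eigen_cond₂' M hm0) (M i j)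
  rw [eps_inv_sq_pow M hm0, one_smul] at h2
  rw [eps_sq_pow M hm0, one_smul] at h1
  have h3 : ((crefl M i * crefl M j) ^ (M i j)) ((ε - ε⁻¹) • Finsupp.single j 1) =
      (ε - ε⁻¹) • Finsupp.single j 1 := by
    have hdecomp : (ε - ε⁻¹) • (Finsupp.single j 1 : B →₀ ℂ) =
        (Finsupp.single i 1 + ε • Finsupp.single j 1) -
        (Finsupp.single i 1 + ε⁻¹ • Finsupp.single j 1) := by module
    rw [hdecomp, map_sub, h2, h1]
  rw [map_smul] at h3
  exact smul_right_injective _ (eps_sub_ne M hm0 hm1) h3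

private lemma gm_fix_i {i j : B} (hij : i ≠ j) (hm0 : M i j ≠ 0) (hm1 : M i j ≠ 1) :
    ((crefl M i * crefl M j) ^ (M i j)) (Finsupp.single i 1) = Finsupp.single i 1 := by
  have h1 := g_pow_eigen M hij (eigen_cond₁ M i j) (eigen_cond₂ M hm0) (M i j)
  rw [eps_sq_pow M hm0, one_smul] at h1
  have h2 := gm_fix_j M hij hm0 hm1
  have hdecomp : (Finsupp.single i 1 : B →₀ ℂ) =
      (Finsupp.single i 1 + (ceps (M i j))⁻¹ • Finsupp.single j 1) -
      (ceps (M i j))⁻¹ • Finsupp.single j 1 := by module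
  rw [hdecomp, map_sub, h1, map_smul, h2]

private lemma one_sub_sq_ne {i j : B} (hm0 : M i j ≠ 0) (hm1 : M i j ≠ 1) :
    1 - ccoef (M i j) ^ 2 ≠ 0 := by
  intro h0
  set ε := ceps (M i j) with hε
  have h1 : ε * ε⁻¹ = 1 := mul_inv_cancel₀ (ceps_ne_zero _)
  have h2c : 2 * ccoef (M i j) = -(ε + ε⁻¹) := two_mul_ccoef hm0
  have h4 : (ε + ε⁻¹) ^ 2 = 4 := by
    linear_combination (-4 : ℂ) * h0 + ((ε + ε⁻¹) - 2 * ccoef (M i j)) * h2c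
  have h5 : (ε ^ 2 - 1) ^ 2 = 0 := by
    linear_combination ε ^ 2 * h4 - (2 * ε ^ 2 + 1 + ε * ε⁻¹) * h1
  have h6 : ε ^ (2 * 1) = 1 := by
    have := pow_eq_zero_iff (n := 2) (by norm_num) |>.mp h5
    rw [pow_mul, pow_one]
    linear_combination this
  exact hm1 (Nat.dvd_one.mp ((ceps_pow_two_mul_eq_one_iff hm0 1).mp h6))

end Pair

private lemma solve_aux₁ {c p q : ℂ} (hd : 1 - c ^ 2 ≠ 0) :
    p - (p - c * q) / (1 - c ^ 2) - (q - c * p) / (1 - c ^ 2) * c = 0 := by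
  field_simp
  ring

private lemma solve_aux₂ {c p q : ℂ} (hd : 1 - c ^ 2 ≠ 0) :
    q - (p - c * q) / (1 - c ^ 2) * c - (q - c * p) / (1 - c ^ 2) = 0 := by
  field_simp
  ring

set_option maxHeartbeats 1000000 in
private lemma gm_fix_all {i j : B} (hij : i ≠ j) (hm0 : M i j ≠ 0) (hm1 : M i j ≠ 1)
    (k : B) :
    ((crefl M i * crefl M j) ^ (M i j)) (Finsupp.single k 1) = Finsupp.single k 1 := by
  rcases eq_or_ne k i with rfl | hki
  · exact gm_fix_i M hij hm0 hm1
  rcases eq_or_ne k j with rfl | hkj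
  · exact gm_fix_j M hij hm0 hm1
  have hdne : 1 - ccoef (M i j) ^ 2 ≠ 0 := one_sub_sq_ne M hm0 hm1
  obtain ⟨a, ha⟩ : ∃ a : ℂ,
      a = (ccoef (M i k) - ccoef (M i j) * ccoef (M j k)) / (1 - ccoef (M i j) ^ 2) := ⟨_, rfl⟩
  obtain ⟨b, hb⟩ : ∃ b : ℂ,
      b = (ccoef (M j k) - ccoef (M i j) * ccoef (M i k)) / (1 - ccoef (M i j) ^ 2) := ⟨_, rfl⟩
  obtain ⟨w, hw⟩ : ∃ w : B →₀ ℂ,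
      w = Finsupp.single k 1 - a • Finsupp.single i 1 - b • Finsupp.single j 1 := ⟨_, rfl⟩
  have hbi : bform M i w = 0 := by
    rw [hw]
    simp only [map_sub, map_smul, bform_single_self, bform_single, smul_eq_mul, mul_one]
    rw [ha, hb]
    exact solve_aux₁ hdne
  have hbj : bform M j w = 0 := by
    rw [hw]
    simp only [map_sub, map_smul, bform_single_self, bform_single, smul_eq_mul, mul_one]
    rw [M.symmetric j i, ha, hb]
    exact solve_aux₂ hdne
  have hgw : (crefl M i * crefl M j) w = w := by
    rw [crefl_mul_apply, crefl_fix M hbj, crefl_fix M hbi]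
  have hfw := end_pow_fix hgw (M i j)
  have hdecomp : (Finsupp.single k 1 : B →₀ ℂ) =
      w + a • Finsupp.single i 1 + b • Finsupp.single j 1 := by
    rw [hw]; module
  rw [hdecomp, map_add, map_add, map_smul, map_smul, hfw,
    gm_fix_i M hij hm0 hm1, gm_fix_j M hij hm0 hm1]

private lemma isLiftable_crefl : CoxeterMatrix.IsLiftable M (crefl M) := by
  intro i j
  rcases eq_or_ne i j with rfl | hij
  · rw [M.diagonal, pow_one]
    exact LinearMap.ext fun v => by
      rw [Module.End.mul_apply, crefl_crefl, Module.End.one_apply]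
  rcases eq_or_ne (M i j) 0 with hm0 | hm0
  · rw [hm0, pow_zero]
  have hm1 : M i j ≠ 1 := M.off_diagonal i j hij
  apply Finsupp.lhom_ext
  intro k x
  have hx : (Finsupp.single k x : B →₀ ℂ) = x • Finsupp.single k 1 := by
    rw [Finsupp.smul_single, smul_eq_mul, mul_one]
  rw [hx, map_smul, map_smul, Module.End.one_apply, gm_fix_all M hij hm0 hm1 k]

/-- The representation of the Coxeter group. -/
private noncomputable def crep : M.Group →* Module.End ℂ (B →₀ ℂ) :=
  M.toCoxeterSystem.lift ⟨crefl M, isLiftable_crefl M⟩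

private lemma crep_simple (i : B) : crep M (M.simple i) = crefl M i := by
  have := M.toCoxeterSystem.lift_apply_simple (isLiftable_crefl M) i
  rwa [M.toCoxeterSystem_simple] at this

/-- unipotent case: `M i j = 0` -/
private lemma g_pow_unipotent {i j : B} (hij : i ≠ j) (hm0 : M i j = 0) (n : ℕ) :
    ((crefl M i * crefl M j) ^ n) (Finsupp.single i 1) =
      (2 * n + 1 : ℂ) • Finsupp.single i 1 + (2 * n : ℂ) • Finsupp.single j 1 := by
  have hc : ccoef (M i j) = -1 := by rw [hm0, ccoef_zero]
  have hcji : ccoef (M j i) = -1 := by rw [M.symmetric j i, hm0, ccoef_zero]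
  have hgi : (crefl M i * crefl M j) (Finsupp.single i 1) =
      (3 : ℂ) • Finsupp.single i 1 + (2 : ℂ) • Finsupp.single j 1 := by
    rw [crefl_mul_apply, crefl_apply, crefl_apply]
    simp only [map_sub, map_smul, bform_single_self, bform_single, hc, hcji, smul_eq_mul]
    match_scalars <;> ring
  have hgj : (crefl M i * crefl M j) (Finsupp.single j 1) =
      (-2 : ℂ) • Finsupp.single i 1 + (-1 : ℂ) • Finsupp.single j 1 := by
    rw [crefl_mul_apply, crefl_apply, crefl_apply]
    simp only [map_sub, map_smul, bform_single_self, bform_single, hc, hcji, smul_eq_mul]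
    match_scalars <;> ring
  induction n with
  | zero => simp
  | succ n ih =>
    rw [pow_succ', Module.End.mul_apply, ih, map_add, map_smul, map_smul, hgi, hgj]
    push_cast
    match_scalars <;> ring

/-- The key theorem: exact order of products of two simple reflections. -/
private theorem pow_simple_mul_simple_eq_one_iff (i j : B) (n : ℕ) :
    (M.simple i * M.simple j) ^ n = 1 ↔ M i j ∣ n := by
  constructor
  · intro h
    rcases eq_or_ne i j with rfl | hij
    · rw [M.diagonal]; exact one_dvd n
    have hg : (crefl M i * crefl M j) ^ n = 1 := by
      have := congrArg (crep M) h
      rwa [map_pow, map_mul, crep_simple, crep_simple, map_one] at this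
    rcases eq_or_ne (M i j) 0 with hm0 | hm0
    · rw [hm0]
      rw [Nat.zero_dvd]
      by_contra hn
      have h1 := g_pow_unipotent M hij hm0 n
      rw [hg, Module.End.one_apply] at h1
      have h2 := congrArg (fun f : B →₀ ℂ => f j) h1
      simp only [Finsupp.add_apply, Finsupp.smul_apply, Finsupp.single_eq_same,
        Finsupp.single_eq_of_ne (Ne.symm hij), smul_eq_mul, mul_zero, mul_one, zero_add] at h2
      have : (n : ℂ) = 0 := by linear_combination -h2 / 2
      exact hn (by exact_mod_cast this)
    have hm1 : M i j ≠ 1 := M.off_diagonal i j hij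
    have h1 := g_pow_eigen M hij (eigen_cond₁ M i j) (eigen_cond₂ M hm0) n
    rw [hg, Module.End.one_apply] at h1
    have h2 := congrArg (fun f : B →₀ ℂ => f i) h1.symm
    simp only [Finsupp.add_apply, Finsupp.smul_apply, Finsupp.single_eq_same,
      Finsupp.single_eq_of_ne hij, smul_eq_mul, mul_zero, mul_one, add_zero] at h2
    have h3 : ceps (M i j) ^ (2 * n) = 1 := by
      rw [pow_mul]
      exact h2
    exact (ceps_pow_two_mul_eq_one_iff hm0 n).mp h3
  · rintro ⟨t, rfl⟩
    have hp := M.toCoxeterSystem.simple_mul_simple_pow i j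
    rw [M.toCoxeterSystem_simple] at hp
    rw [pow_mul, hp, one_pow]

private theorem simple_injective : Function.Injective M.simple := by
  intro i j h
  by_contra hij
  have h1 : (M.simple i * M.simple j) ^ 1 = 1 := by
    rw [pow_one, h, ← M.toCoxeterSystem_simple]
    exact M.toCoxeterSystem.simple_mul_simple_self j
  exact M.off_diagonal i j hij (Nat.dvd_one.mp ((pow_simple_mul_simple_eq_one_iff M i j 1).mp h1))

end AuxRep

section Main
variable (M : CoxeterMatrix B)

private lemma mem_wAut {σ : Equiv.Perm B} :
    σ ∈ wAut M ↔ ∀ x y : B, M (σ x) (σ y) = M x y := Iff.rfl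

private lemma simple_ne_one (x : B) : M.simple x ≠ 1 := by
  intro h
  have h1 := M.toCoxeterSystem.length_simple x
  rw [M.toCoxeterSystem_simple, h, M.toCoxeterSystem.length_one] at h1
  exact zero_ne_one h1

private noncomputable def homW (σ : ↥(wAut M)) : M.Group →* M.Group :=
  M.toCoxeterSystem.lift ⟨fun x => M.simple ((σ : Equiv.Perm B) x), fun x y => by
    have h := M.toCoxeterSystem.simple_mul_simple_pow ((σ : Equiv.Perm B) x)
      ((σ : Equiv.Perm B) y)
    rw [M.toCoxeterSystem_simple, (mem_wAut M).mp σ.2 x y] at h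
    exact h⟩

private lemma homW_simple (σ : ↥(wAut M)) (x : B) :
    homW M σ (M.simple x) = M.simple ((σ : Equiv.Perm B) x) :=
  M.toCoxeterSystem.lift_apply_simple _ x

private lemma homW_comp (σ τ : ↥(wAut M)) :
    (homW M σ).comp (homW M τ) = homW M (σ * τ) := by
  apply M.toCoxeterSystem.ext_simple
  intro x
  rw [M.toCoxeterSystem_simple, MonoidHom.comp_apply, homW_simple, homW_simple, homW_simple]
  rfl

private lemma homW_one : homW M 1 = MonoidHom.id M.Group := by
  apply M.toCoxeterSystem.ext_simple
  intro x
  rw [M.toCoxeterSystem_simple, homW_simple, MonoidHom.id_apply]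
  rfl

private noncomputable def PhiFun (σ : ↥(wAut M)) : Equiv.Perm M.Group where
  toFun := homW M σ
  invFun := homW M σ⁻¹
  left_inv w := by
    have h : (homW M σ⁻¹).comp (homW M σ) = MonoidHom.id M.Group := by
      rw [homW_comp, inv_mul_cancel, homW_one]
    exact DFunLike.congr_fun h w
  right_inv w := by
    have h : (homW M σ).comp (homW M σ⁻¹) = MonoidHom.id M.Group := by
      rw [homW_comp, mul_inv_cancel, homW_one]
    exact DFunLike.congr_fun h w

private lemma PhiFun_apply (σ : ↥(wAut M)) (w : M.Group) :
    PhiFun M σ w = homW M σ w := rfl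

private noncomputable def Phi : ↥(wAut M) →* Equiv.Perm M.Group where
  toFun := PhiFun M
  map_one' := by
    ext w
    rw [PhiFun_apply, homW_one, MonoidHom.id_apply]
    rfl
  map_mul' σ τ := by
    ext w
    rw [Equiv.Perm.mul_apply, PhiFun_apply, PhiFun_apply, PhiFun_apply, ← homW_comp]
    rfl

private lemma Phi_localAction (σ : ↥(wAut M)) (v : M.Group) :
    IsLocalAction M (Phi M σ) v (σ : Equiv.Perm B) := by
  intro x
  show homW M σ (v * M.simple x) = homW M σ v * M.simple _
  rw [map_mul, homW_simple]


end Main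

section Main2
variable (M : CoxeterMatrix B)

private lemma cayley_adj_iff {v w : M.Group} :
    (cayley M).Adj v w ↔ v ≠ w ∧ ∃ x : B, w = v * M.simple x := Iff.rfl

private lemma perm_apply_inv_self {X : Type*} (α : Equiv.Perm X) (x : X) : α (α⁻¹ x) = x :=
  α.apply_symm_apply x

private lemma eq_of_localAction {α β : Equiv.Perm M.Group} (τ : B → B)
    (h1 : α 1 = β 1) (ha : ∀ v, IsLocalAction M α v τ)
    (hb : ∀ v, IsLocalAction M β v τ) : α = β := by
  ext w
  induction w using M.toCoxeterSystem.simple_induction_right with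
  | one => exact h1
  | mul_simple_right w x ih =>
    rw [M.toCoxeterSystem_simple, ha w x, hb w x, ih]

private lemma alpha_pow {α : Equiv.Perm M.Group} {τ : B → B}
    (h1 : α 1 = 1) (ha : ∀ v, IsLocalAction M α v τ) (x y : B) (n : ℕ) :
    α ((M.simple x * M.simple y) ^ n) =
      (M.simple (τ x) * M.simple (τ y)) ^ n := by
  induction n with
  | zero => simpa using h1
  | succ n ih =>
    rw [pow_succ, ← mul_assoc, ha _ y, ha _ x, ih, mul_assoc, ← pow_succ]

private lemma weight_preserved {α : Equiv.Perm M.Group} {τ : B → B}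
    (h1 : α 1 = 1) (ha : ∀ v, IsLocalAction M α v τ) (x y : B) :
    M (τ x) (τ y) = M x y := by
  have key : ∀ n : ℕ, ((M.simple x * M.simple y) ^ n = 1 ↔
      (M.simple (τ x) * M.simple (τ y)) ^ n = 1) := by
    intro n
    constructor
    · intro h
      rw [← alpha_pow M h1 ha x y n, h, h1]
    · intro h
      apply α.injective
      rw [alpha_pow M h1 ha x y n, h, h1]
  apply Nat.dvd_antisymm
  · -- M (τ x) (τ y) ∣ M x y
    exact (pow_simple_mul_simple_eq_one_iff M (τ x) (τ y) (M x y)).mp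
      ((key (M x y)).mp ((pow_simple_mul_simple_eq_one_iff M x y (M x y)).mpr dvd_rfl))
  · exact (pow_simple_mul_simple_eq_one_iff M x y (M (τ x) (τ y))).mp
      ((key (M (τ x) (τ y))).mpr
        ((pow_simple_mul_simple_eq_one_iff M (τ x) (τ y) _).mpr dvd_rfl))

private lemma alpha_simple {α : Equiv.Perm M.Group} {τ : B → B}
    (h1 : α 1 = 1) (ha : ∀ v, IsLocalAction M α v τ) (x : B) :
    α (M.simple x) = M.simple (τ x) := by
  have := ha 1 x
  rwa [one_mul, h1, one_mul] at this

private lemma tau_injective {α : Equiv.Perm M.Group} {τ : B → B}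
    (h1 : α 1 = 1) (ha : ∀ v, IsLocalAction M α v τ) :
    Function.Injective τ := by
  intro x y h
  apply simple_injective M
  apply α.injective
  rw [alpha_simple M h1 ha, alpha_simple M h1 ha, h]

private lemma tau_surjective {α : Equiv.Perm M.Group} {τ : B → B}
    (hg : α ∈ graphAut (cayley M))
    (h1 : α 1 = 1) (ha : ∀ v, IsLocalAction M α v τ) :
    Function.Surjective τ := by
  intro y
  have hadj : (cayley M).Adj 1 (M.simple y) := by
    rw [cayley_adj_iff]
    refine ⟨fun h => simple_ne_one M y h.symm, y, (one_mul _).symm⟩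
  have hinv1 : α⁻¹ (1 : M.Group) = 1 := by
    apply α.injective
    rw [perm_apply_inv_self, h1]
  have hadj' : (cayley M).Adj 1 (α⁻¹ (M.simple y)) := by
    have h := hg (α⁻¹ (1 : M.Group)) (α⁻¹ (M.simple y))
    rw [perm_apply_inv_self, perm_apply_inv_self, hinv1] at h
    exact h.mp hadj
  rw [cayley_adj_iff] at hadj'
  obtain ⟨-, x, hx⟩ := hadj'
  rw [one_mul] at hx
  refine ⟨x, simple_injective M ?_⟩
  rw [← alpha_simple M h1 ha x, ← hx, perm_apply_inv_self]

end Main2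

-- STATEMENT 4
theorem wAut_iso_almost_translations_fixing_id {B : Type*} (M : CoxeterMatrix B) :
    ∃ Φ : ↥(wAut M) →* Equiv.Perm M.Group,
      Function.Injective Φ ∧
      (∀ σ : ↥(wAut M), Φ σ ∈ graphAut (cayley M) ∧ (Φ σ) (1 : M.Group) = 1 ∧
        ∀ v : M.Group, IsLocalAction M (Φ σ) v (σ : Equiv.Perm B)) ∧
      (∀ (σ : ↥(wAut M)) (α : Equiv.Perm M.Group), α ∈ graphAut (cayley M) →
        α (1 : M.Group) = 1 → (∀ v : M.Group, IsLocalAction M α v (σ : Equiv.Perm B)) →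
        α = Φ σ) ∧
      Set.range Φ = {α : Equiv.Perm M.Group | α ∈ graphAut (cayley M) ∧ α (1 : M.Group) = 1 ∧
        ∃ τ : B → B, ∀ v : M.Group, IsLocalAction M α v τ} := by
  have hgraph : ∀ σ : ↥(wAut M), Phi M σ ∈ graphAut (cayley M) := by
    intro σ v w
    rw [cayley_adj_iff, cayley_adj_iff]
    constructor
    · rintro ⟨hne, x, hx⟩
      refine ⟨fun h => hne (congrArg (Phi M σ) h), ((σ⁻¹ : ↥(wAut M)) : Equiv.Perm B) x, ?_⟩
      apply (Phi M σ).injective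
      rw [hx, Phi_localAction M σ v]
      congr 1
      congr 1
      simp
    · rintro ⟨hne, x, rfl⟩
      exact ⟨fun h => hne ((Phi M σ).injective h), (σ : Equiv.Perm B) x,
        Phi_localAction M σ v x⟩
  have hone : ∀ σ : ↥(wAut M), Phi M σ (1 : M.Group) = 1 := fun σ => map_one (homW M σ)
  refine ⟨Phi M, ?_, ?_, ?_, ?_⟩
  · -- injectivity
    intro σ τ h
    apply Subtype.ext
    apply Equiv.ext
    intro x
    apply simple_injective M
    have hx : Phi M σ (M.simple x) = Phi M τ (M.simple x) := by rw [h]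
    have hx2 : homW M σ (M.simple x) = homW M τ (M.simple x) := hx
    rwa [homW_simple, homW_simple] at hx2
  · exact fun σ => ⟨hgraph σ, hone σ, Phi_localAction M σ⟩
  · intro σ α hga h1 hloc
    exact eq_of_localAction M ((σ : Equiv.Perm B) : B → B)
      (by rw [h1, hone σ]) hloc (Phi_localAction M σ)
  · ext α
    simp only [Set.mem_range, Set.mem_setOf_eq]
    constructor
    · rintro ⟨σ, rfl⟩
      exact ⟨hgraph σ, hone σ, (σ : Equiv.Perm B), Phi_localAction M σ⟩
    · rintro ⟨hga, h1, τ, hloc⟩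
      have hbij : Function.Bijective τ :=
        ⟨tau_injective M h1 hloc, tau_surjective M hga h1 hloc⟩
      have hmem : Equiv.ofBijective τ hbij ∈ wAut M := by
        intro x y
        exact weight_preserved M h1 hloc x y
      refine ⟨⟨Equiv.ofBijective τ hbij, hmem⟩, ?_⟩
      exact (eq_of_localAction M τ (by rw [h1, hone]) hloc
        (Phi_localAction M ⟨Equiv.ofBijective τ hbij, hmem⟩)).symm
end

section
/- Let Γ be a weighted graph, S ⊊ VΓ a good separating set, and Γ_1 the corresponding factor. Then the standard parabolic subgroup W_{Γ_1} has infinite index in the Coxeter group W_Γ. -/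
/-!
Setup for Cayley graphs of Coxeter groups.

A weighted graph `Γ = (VΓ, EΓ, m)` in the sense of the paper is encoded by a Mathlib
`CoxeterMatrix B` (`B = VΓ`): the weight `m x y` is `M x y`, where the entry `0` encodes `∞`
(no relation / no edge).  The associated Coxeter group is `M.Group`, with standard generators
`M.simple x`.
-/

open CoxeterMatrix

variable {B : Type*}

/-! ### Auxiliary development: the geometric (Tits) representation -/

noncomputable section PIIAux

namespace PIIAux

open Finsupp

variable {B : Type*} (M : CoxeterMatrix B)

/-- The entries of the bilinear form of the geometric representation, as complex numbers. -/
def kc (i j : B) : ℂ := ((- Real.cos (Real.pi / (M i j)) : ℝ) : ℂ)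

lemma kc_symm (i j : B) : kc M i j = kc M j i := by
  rw [kc, kc, M.symmetric i j]

lemma kc_diag (i : B) : kc M i i = 1 := by
  simp [kc, M.diagonal i]

lemma kc_of_eq_zero {i j : B} (h : M i j = 0) : kc M i j = -1 := by
  simp [kc, h]

/-- The linear functional `v ↦ B(e_i, v)`. -/
def ev (i : B) : (B →₀ ℂ) →ₗ[ℂ] ℂ :=
  Finsupp.lsum ℂ fun j => LinearMap.toSpanSingleton ℂ ℂ (kc M i j)

lemma ev_single (i j : B) (a : ℂ) : ev M i (Finsupp.single j a) = a * kc M i j := by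
  simp [ev, Finsupp.lsum_single, LinearMap.toSpanSingleton_apply, smul_eq_mul]

/-- The reflection `σ_i` of the geometric representation. -/
def sg (i : B) : Module.End ℂ (B →₀ ℂ) :=
  LinearMap.id - (ev M i).smulRight ((2:ℂ) • Finsupp.single i 1)

lemma sg_apply (i : B) (v : B →₀ ℂ) :
    sg M i v = v - (2 * ev M i v) • Finsupp.single i 1 := by
  simp only [sg, LinearMap.sub_apply, LinearMap.id_apply, LinearMap.smulRight_apply,
    smul_smul]
  rw [mul_comm]

lemma sg_sq (i : B) : sg M i * sg M i = 1 := by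
  apply LinearMap.ext; intro v
  have h1 : ev M i (Finsupp.single i (1:ℂ)) = 1 := by
    rw [ev_single, kc_diag, one_mul]
  rw [Module.End.mul_apply, sg_apply, sg_apply, Module.End.one_apply, map_sub, map_smul, h1]
  rw [smul_eq_mul, mul_one]
  module

lemma ev_pair (i p q : B) (a b : ℂ) :
    ev M i (a • Finsupp.single p (1:ℂ) + b • Finsupp.single q (1:ℂ))
      = a * kc M i p + b * kc M i q := by
  simp [map_add, map_smul, ev_single, smul_eq_mul]

set_option maxHeartbeats 1600000 in
lemma isLiftable : CoxeterMatrix.IsLiftable M (sg M) := by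
  intro i j
  rcases Nat.eq_zero_or_pos (M i j) with h0 | hpos
  · rw [h0, pow_zero]
  by_cases hij : i = j
  · subst hij; rw [M.diagonal, pow_one]; exact sg_sq M i
  have hm2 : 2 ≤ M i j := by
    have := M.off_diagonal i j hij; omega
  -- main case : 2 ≤ m
  set m : ℕ := M i j with hm
  set θ : ℝ := Real.pi / m with hθ
  have hmR : (2:ℝ) ≤ (m:ℝ) := by exact_mod_cast hm2
  have hθpos : 0 < θ := by
    apply div_pos Real.pi_pos
    linarith
  have hθle : θ ≤ Real.pi / 2 := by
    rw [hθ]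
    gcongr
  have hθltpi : θ < Real.pi := by
    have : Real.pi / 2 < Real.pi := by linarith [Real.pi_pos]
    linarith
  set cR : ℝ := Real.cos θ with hcR
  set c : ℂ := (cR : ℂ) with hcc
  have hkcij : kc M i j = -c := by
    rw [kc, hcc, hcR, hθ, hm]
    push_cast
    ring
  have hkcji : kc M j i = -c := by rw [← kc_symm]; exact hkcij
  have hkcii : kc M i i = 1 := kc_diag M i
  have hkcjj : kc M j j = 1 := kc_diag M j
  set u : ℂ := Complex.exp (θ * Complex.I) with hu
  have hu0 : u ≠ 0 := Complex.exp_ne_zero _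
  have huinv : u⁻¹ = Complex.exp (-(θ * Complex.I)) := by
    rw [hu, ← Complex.exp_neg]
  have hc : c = (u + u⁻¹) / 2 := by
    rw [hcc, hcR]
    rw [Complex.ofReal_cos, hu, huinv]
    have h2 : (-(((θ:ℂ)) * Complex.I)) = ((-θ : ℂ)) * Complex.I := by ring
    rw [h2, Complex.exp_mul_I, Complex.exp_mul_I, Complex.cos_neg, Complex.sin_neg]
    ring
  have hne : u - u⁻¹ ≠ 0 := by
    intro h
    have hsq : u ^ 2 = 1 := by
      have h' : u = u⁻¹ := by linear_combination h
      calc u ^ 2 = u * u := sq u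
        _ = u * u⁻¹ := by rw [← h']
        _ = 1 := mul_inv_cancel₀ hu0
    have : Complex.exp ((2:ℕ) * (θ * Complex.I)) = 1 := by
      rw [Complex.exp_nat_mul]; exact_mod_cast hsq
    rw [Complex.exp_eq_one_iff] at this
    obtain ⟨n, hn⟩ := this
    have hn' : ((2 * θ : ℝ) : ℂ) * Complex.I = ((n * (2 * Real.pi) : ℝ) : ℂ) * Complex.I := by
      push_cast
      push_cast at hn
      linear_combination hn
    have hre : (2 * θ : ℝ) = n * (2 * Real.pi) := by
      have := mul_right_cancel₀ Complex.I_ne_zero hn'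
      exact_mod_cast this
    have hpi := Real.pi_pos
    have hn0 : (0:ℝ) < n := by nlinarith
    have hn1 : (n:ℝ) < 1 := by nlinarith
    have : (0:ℤ) < n := by exact_mod_cast hn0
    have : (n:ℤ) < 1 := by exact_mod_cast hn1
    omega
  have hdid : (u - u⁻¹)⁻¹ * (u - u⁻¹) = 1 := inv_mul_cancel₀ hne
  have hu1 : u * u⁻¹ = 1 := mul_inv_cancel₀ hu0
  have h2m : u ^ (2 * m) = 1 := by
    have hmC : (m:ℂ) ≠ 0 := by
      exact_mod_cast Nat.cast_ne_zero.mpr (by omega : m ≠ 0)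
    rw [hu, ← Complex.exp_nat_mul]
    rw [show ((2 * m : ℕ) : ℂ) * ((θ:ℂ) * Complex.I) = 2 * Real.pi * Complex.I by
      rw [hθ]; push_cast; field_simp]
    exact Complex.exp_two_pi_mul_I
  have h2m' : (u⁻¹) ^ (2 * m) = 1 := by
    rw [inv_pow, h2m, inv_one]
  -- the 2x2 evolution step on the plane spanned by e_i, e_j
  set e : B → (B →₀ ℂ) := fun b => Finsupp.single b (1:ℂ) with he
  have hevi : ∀ a b : ℂ, ev M i (a • e i + b • e j) = a - c * b := by
    intro a b; rw [he, ev_pair, hkcii, hkcij]; ring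
  have hevj : ∀ a b : ℂ, ev M j (a • e i + b • e j) = -(c * a) + b := by
    intro a b; rw [he, ev_pair, hkcji, hkcjj]; ring
  have step : ∀ a b : ℂ, (sg M i * sg M j) (a • e i + b • e j)
      = ((4*c^2 - 1)*a - 2*c*b) • e i + (2*c*a - b) • e j := by
    intro a b
    have h1 : sg M j (a • e i + b • e j) = a • e i + (2*c*a - b) • e j := by
      rw [sg_apply, hevj]
      module
    rw [Module.End.mul_apply, h1, sg_apply, hevi]
    module
  -- closed form for powers on the plane
  set d : ℂ := (u - u⁻¹)⁻¹ with hd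
  have plane : ∀ (n : ℕ) (a b : ℂ), ((sg M i * sg M j) ^ n) (a • e i + b • e j)
      = (d * ((u * u^(2*n) - u⁻¹ * (u⁻¹)^(2*n)) * a + ((u⁻¹)^(2*n) - u^(2*n)) * b)) • e i
      + (d * ((u^(2*n) - (u⁻¹)^(2*n)) * a + (u * (u⁻¹)^(2*n) - u⁻¹ * u^(2*n)) * b)) • e j := by
    intro n
    induction n with
    | zero =>
      intro a b
      rw [pow_zero, Module.End.one_apply]
      rw [show (2 * 0 : ℕ) = 0 from rfl, pow_zero, pow_zero]
      rw [show d * ((u * 1 - u⁻¹ * 1) * a + (1 - 1) * b) = a by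
        rw [hd]; linear_combination a * hdid]
      rw [show d * ((1 - 1) * a + (u * 1 - u⁻¹ * 1) * b) = b by
        rw [hd]; linear_combination b * hdid]
    | succ n ih =>
      intro a b
      have hXs : u ^ (2 * (n+1)) = u^2 * u^(2*n) := by
        rw [← pow_add]; congr 1; omega
      have hYs : (u⁻¹) ^ (2 * (n+1)) = (u⁻¹)^2 * (u⁻¹)^(2*n) := by
        rw [← pow_add]; congr 1; omega
      have hA : ∀ X Y a b : ℂ, (u - u⁻¹)⁻¹ * ((u * X - u⁻¹ * Y) *
            ((4*((u + u⁻¹)/2)^2 - 1)*a - 2*((u + u⁻¹)/2)*b)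
            + (Y - X) * (2*((u + u⁻¹)/2)*a - b))
          = (u - u⁻¹)⁻¹ * ((u * (u^2 * X) - u⁻¹ * ((u⁻¹)^2 * Y)) * a
            + ((u⁻¹)^2 * Y - u^2 * X) * b) := by
        intro X Y a b
        congr 1
        linear_combination ((2*u*X + u⁻¹*X - u*Y - 2*u⁻¹*Y) * a + (Y - X) * b) * hu1
      have hB : ∀ X Y a b : ℂ, (u - u⁻¹)⁻¹ * ((X - Y) *
            ((4*((u + u⁻¹)/2)^2 - 1)*a - 2*((u + u⁻¹)/2)*b)
            + (u * Y - u⁻¹ * X) * (2*((u + u⁻¹)/2)*a - b))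
          = (u - u⁻¹)⁻¹ * ((u^2 * X - (u⁻¹)^2 * Y) * a
            + (u * ((u⁻¹)^2 * Y) - u⁻¹ * (u^2 * X)) * b) := by
        intro X Y a b
        congr 1
        linear_combination ((X - Y) * a + (u*X - u⁻¹*Y) * b) * hu1
      rw [pow_succ, Module.End.mul_apply, step a b, ih, hXs, hYs, hc, hd, hA, hB]
  -- fixed vectors
  have fixedpt : ∀ (n : ℕ) (z : B →₀ ℂ), ev M i z = 0 → ev M j z = 0 →
      ((sg M i * sg M j) ^ n) z = z := by
    intro n z hzi hzj
    induction n with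
    | zero => rw [pow_zero, Module.End.one_apply]
    | succ n ih =>
      have h1 : sg M j z = z := by rw [sg_apply, hzj]; simp
      have h2 : sg M i z = z := by rw [sg_apply, hzi]; simp
      rw [pow_succ, Module.End.mul_apply, Module.End.mul_apply, h1, h2, ih]
  -- bounds on the cosine
  have hc0 : 0 ≤ cR := Real.cos_nonneg_of_mem_Icc ⟨by linarith, hθle⟩
  have hc1 : cR < 1 := by
    rw [hcR]
    calc Real.cos θ < Real.cos 0 := by
          apply Real.cos_lt_cos_of_nonneg_of_le_pi (le_refl 0) (le_of_lt hθltpi) hθpos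
      _ = 1 := Real.cos_zero
  have hD : ((1 - cR^2 : ℝ) : ℂ) ≠ 0 := by
    have : (0:ℝ) < 1 - cR^2 := by nlinarith
    exact_mod_cast ne_of_gt this
  -- final assembly
  apply LinearMap.ext
  intro v
  rw [Module.End.one_apply]
  set p : ℂ := ev M i v with hp
  set r : ℂ := ev M j v with hr
  have hDc : (1 - c^2 : ℂ) = ((1 - cR^2 : ℝ) : ℂ) := by
    rw [hcc]; push_cast; ring
  have hD' : (1 - c^2 : ℂ) ≠ 0 := by rw [hDc]; exact hD
  set a : ℂ := (p + c * r) / (1 - c^2) with ha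
  set b : ℂ := (r + c * p) / (1 - c^2) with hb
  set z : B →₀ ℂ := v - a • e i - b • e j with hz
  have hzi : ev M i z = 0 := by
    rw [hz]
    rw [map_sub, map_sub, map_smul, map_smul]
    rw [he]
    simp only [ev_single, one_mul]
    rw [hkcii, hkcij, ← hp, ha, hb]
    rw [smul_eq_mul, smul_eq_mul, mul_one]
    field_simp
    ring
  have hzj : ev M j z = 0 := by
    rw [hz]
    rw [map_sub, map_sub, map_smul, map_smul]
    rw [he]
    simp only [ev_single, one_mul]
    rw [hkcji, hkcjj, ← hr, ha, hb]
    rw [smul_eq_mul, smul_eq_mul, mul_one]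
    field_simp
    ring
  have hv : v = (a • e i + b • e j) + z := by rw [hz]; abel
  rw [hv, map_add, plane m a b, fixedpt m z hzi hzj, h2m, h2m']
  rw [show d * ((u * 1 - u⁻¹ * 1) * a + (1 - 1) * b) = a by rw [hd]; linear_combination a * hdid]
  rw [show d * ((1 - 1) * a + (u * 1 - u⁻¹ * 1) * b) = b by rw [hd]; linear_combination b * hdid]

/-- The geometric representation of the Coxeter group. -/
def rep : M.Group →* Module.End ℂ (B →₀ ℂ) :=
  M.toCoxeterSystem.lift ⟨sg M, isLiftable M⟩

lemma rep_simple (i : B) : rep M (M.simple i) = sg M i := by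
  have h := M.toCoxeterSystem.lift_apply_simple (isLiftable M) i
  rwa [M.toCoxeterSystem_simple] at h

lemma support_mem (Γ₁ : Set B) {w : M.Group}
    (hw : w ∈ Subgroup.closure (M.simple '' Γ₁)) :
    ∀ v : B →₀ ℂ, rep M w v - v ∈ Finsupp.supported ℂ ℂ Γ₁ := by
  induction hw using Subgroup.closure_induction with
  | mem g hg =>
    obtain ⟨z, hz, rfl⟩ := hg
    intro v
    rw [rep_simple, sg_apply]
    rw [sub_sub_cancel_left]
    apply neg_mem
    apply Submodule.smul_mem
    exact Finsupp.single_mem_supported ℂ 1 hz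
  | one =>
    intro v
    rw [map_one, Module.End.one_apply, sub_self]
    exact Submodule.zero_mem _
  | mul g₁ g₂ hg₁ hg₂ p₁ p₂ =>
    intro v
    have h : rep M (g₁ * g₂) v - v
        = (rep M g₁ (rep M g₂ v) - rep M g₂ v) + (rep M g₂ v - v) := by
      rw [map_mul, Module.End.mul_apply]; abel
    rw [h]
    exact Submodule.add_mem _ (p₁ _) (p₂ _)
  | inv g hg p =>
    intro v
    have h1 := p (rep M g⁻¹ v)
    have h2 : rep M g (rep M g⁻¹ v) = v := by
      rw [← Module.End.mul_apply, ← map_mul, mul_inv_cancel, map_one, Module.End.one_apply]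
    rw [h2] at h1
    have h3 : rep M g⁻¹ v - v = -(v - rep M g⁻¹ v) := by abel
    rw [h3]
    exact Submodule.neg_mem _ h1

end PIIAux

end PIIAux

-- STATEMENT 13
theorem parabolic_infinite_index {B : Type*} (M : CoxeterMatrix B) (S Γ₁ : Set B)
    (hf : IsFactor M S Γ₁)
    (hgood : ∃ σ : Equiv.Perm ↥Γ₁, σ ≠ 1 ∧
      (∀ a b : ↥Γ₁, M ((σ a : B)) ((σ b : B)) = M (a : B) (b : B)) ∧
      (∀ a : ↥Γ₁, (a : B) ∈ S → σ a = a)) :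
    Infinite (M.Group ⧸ Subgroup.closure (M.simple '' Γ₁)) := by
  classical
  obtain ⟨hSne, hdisc, C, hΓ, hCsub, ⟨x, hxC⟩, ⟨y, hyC⟩, hclosed⟩ := hf
  -- y is not in Γ₁
  have hyΓ : y ∉ Γ₁ := by
    rw [hΓ]
    rintro (h | h)
    · exact hyC.1 h
    · exact hyC.2 h
  have hxS : x ∈ Sᶜ := hCsub hxC
  have hxy : x ≠ y := fun h => hyC.2 (h ▸ hxC)
  -- M x y = 0
  have hMxy : M x y = 0 := by
    by_contra h
    have hadj : (cGraph M).Adj x y := (⟨hxy, h⟩ : x ≠ y ∧ M x y ≠ 0)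
    have hadj' : ((cGraph M).induce Sᶜ).Adj ⟨x, hxS⟩ ⟨y, hyC.1⟩ := hadj
    exact hyC.2 (hclosed ⟨x, hxS⟩ ⟨y, hyC.1⟩ hadj'.reachable hxC)
  have hMyx : M y x = 0 := by rwa [M.symmetric y x]
  -- the representation
  set P : Subgroup M.Group := Subgroup.closure (M.simple '' Γ₁) with hP
  set q : M.Group := M.simple x * M.simple y with hq
  set e : B → (B →₀ ℂ) := fun b => Finsupp.single b (1:ℂ) with he
  have hkxy : PIIAux.kc M x y = -1 := PIIAux.kc_of_eq_zero M hMxy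
  have hkyx : PIIAux.kc M y x = -1 := PIIAux.kc_of_eq_zero M hMyx
  have hkxx : PIIAux.kc M x x = 1 := PIIAux.kc_diag M x
  have hkyy : PIIAux.kc M y y = 1 := PIIAux.kc_diag M y
  have hpow : ∀ k : ℕ, PIIAux.rep M (q ^ k) (e x)
      = ((2 * k + 1 : ℂ)) • e x + ((2 * k : ℂ)) • e y := by
    intro k
    induction k with
    | zero =>
      rw [pow_zero, map_one, Module.End.one_apply]
      push_cast
      module
    | succ k ih =>
      rw [pow_succ', map_mul, Module.End.mul_apply, ih, hq, map_mul, Module.End.mul_apply,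
        PIIAux.rep_simple, PIIAux.rep_simple]
      have h1 : PIIAux.sg M y ((2 * k + 1 : ℂ) • e x + (2 * k : ℂ) • e y)
          = (2 * k + 1 : ℂ) • e x + (2 * k + 2 : ℂ) • e y := by
        rw [PIIAux.sg_apply]
        rw [he]
        rw [PIIAux.ev_pair, hkyx, hkyy]
        rw [show ((2 * (k:ℂ) + 1) * -1 + 2 * (k:ℂ) * 1 : ℂ) = -1 by ring]
        module
      rw [h1, PIIAux.sg_apply, he, PIIAux.ev_pair, hkxx, hkxy]
      rw [show ((2 * (k:ℂ) + 1) * 1 + (2 * (k:ℂ) + 2) * (-1) : ℂ) = -1 by ring]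
      push_cast
      module
  have hker : ∀ k : ℕ, q ^ k ∈ P → k = 0 := by
    intro k hk
    have h := PIIAux.support_mem M Γ₁ hk (e x)
    rw [hpow k] at h
    rw [Finsupp.mem_supported'] at h
    have hy' := h y hyΓ
    have hval : (((2 * (k:ℕ) + 1 : ℂ)) • e x + ((2 * (k:ℕ) : ℂ)) • e y - e x) y
        = 2 * (k:ℂ) := by
      rw [he]
      simp [Finsupp.single_apply, hxy]
    rw [hval] at hy'
    have hk0 : (k:ℂ) = 0 := by linear_combination hy' / 2
    exact_mod_cast hk0
  have hinj : Function.Injective (fun k : ℕ => ((q ^ k : M.Group) : M.Group ⧸ P)) := by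
    intro a b hab
    simp only at hab
    rcases le_total a b with hle | hle
    · have h1 : (q ^ a)⁻¹ * q ^ b ∈ P := QuotientGroup.eq.mp hab
      have h2 : (q ^ a)⁻¹ * q ^ b = q ^ (b - a) := by
        rw [show b = a + (b - a) from (Nat.add_sub_cancel' hle).symm, pow_add,
          inv_mul_cancel_left]
        congr 1
        omega
      rw [h2] at h1
      have := hker _ h1
      omega
    · have h1 : (q ^ b)⁻¹ * q ^ a ∈ P := QuotientGroup.eq.mp hab.symm
      have h2 : (q ^ b)⁻¹ * q ^ a = q ^ (a - b) := by
        rw [show a = b + (a - b) from (Nat.add_sub_cancel' hle).symm, pow_add,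
          inv_mul_cancel_left]
        congr 1
        omega
      rw [h2] at h1
      have := hker _ h1
      omega
  exact Infinite.of_injective _ hinj
end

section
/- Let Γ be an infinite tree (a connected simplicial graph with no cycles) without leaves (every vertex has degree at least 2). Then the complement graph Γ^c, regarded as a right-angled weighted graph (all edges of weight 2), does not admit a good separating set; equivalently, for every vertex v of Γ^c and every nontrivial automorphism α of Γ^c, α does not restrict to the identity on star_{Γ^c}(v). -/
/-!
Setup for Cayley graphs of Coxeter groups.

A weighted graph `Γ = (VΓ, EΓ, m)` in the sense of the paper is encoded by a Mathlib
`CoxeterMatrix B` (`B = VΓ`): the weight `m x y` is `M x y`, where the entry `0` encodes `∞`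
(no relation / no edge).  The associated Coxeter group is `M.Group`, with standard generators
`M.simple x`.
-/

open CoxeterMatrix

variable {B : Type*}

section Aux

open SimpleGraph

open Classical in
lemma ofGraph_apply' {V : Type*} (G : SimpleGraph V) (x y : V) :
    ofGraph G x y = if x = y then 1 else if G.Adj x y then 2 else 0 := rfl

lemma ofGraph_eq_two_iff {V : Type*} (G : SimpleGraph V) (x y : V) :
    ofGraph G x y = 2 ↔ G.Adj x y := by
  rw [ofGraph_apply']
  split_ifs with h1 h2
  · subst h1; simp
  · simpa using h2
  · simpa using h2

lemma ofGraph_ne_zero_iff {V : Type*} (G : SimpleGraph V) (x y : V) :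
    ofGraph G x y ≠ 0 ↔ (x = y ∨ G.Adj x y) := by
  rw [ofGraph_apply']
  split_ifs with h1 h2
  · simp [h1]
  · simp [h1, h2]
  · simp [h1, h2]

lemma cGraph_ofGraph_adj {V : Type*} (G : SimpleGraph V) (x y : V) :
    (cGraph (ofGraph G)).Adj x y ↔ G.Adj x y := by
  show (x ≠ y ∧ ofGraph G x y ≠ 0) ↔ _
  rw [ofGraph_ne_zero_iff]
  constructor
  · rintro ⟨h1, h2 | h2⟩ <;> [exact absurd h2 h1; exact h2]
  · exact fun h => ⟨h.ne, Or.inr h⟩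

lemma mem_starSet_ofGraph {V : Type*} (G : SimpleGraph V) (v y : V) :
    y ∈ starSet (ofGraph G) v ↔ y = v ∨ G.Adj v y := by
  unfold starSet
  simp only [Set.mem_insert_iff, mem_neighborSet]
  rw [cGraph_ofGraph_adj]

lemma tree_no_two_paths {V : Type*} {G : SimpleGraph V} (htree : G.IsTree)
    {v u u' w : V} (hvu : G.Adj v u) (hvu' : G.Adj v u') (huw : G.Adj u w)
    (hu'w : G.Adj u' w) (hvw : v ≠ w) : u = u' := by
  have hp1 : (Walk.cons hvu (Walk.cons huw Walk.nil)).IsPath := by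
    simp [Walk.isPath_def, hvu.ne, hvw, huw.ne]
  have hp2 : (Walk.cons hvu' (Walk.cons hu'w Walk.nil)).IsPath := by
    simp [Walk.isPath_def, hvu'.ne, hvw, hu'w.ne]
  obtain ⟨p, -, hup⟩ := htree.existsUnique_path v w
  have heq := (hup _ hp1).trans (hup _ hp2).symm
  have h2 := congrArg (fun q => Walk.getVert q 1) heq
  simpa [Walk.getVert] using h2

lemma tree_no_triangle {V : Type*} {G : SimpleGraph V} (htree : G.IsTree)
    {v u w : V} (hvu : G.Adj v u) (huw : G.Adj u w) (hvw : G.Adj v w) : False := by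
  have hp1 : (Walk.cons hvw Walk.nil).IsPath := by
    simp [Walk.isPath_def, hvw.ne]
  have hp2 : (Walk.cons hvu (Walk.cons huw Walk.nil)).IsPath := by
    simp [Walk.isPath_def, hvu.ne, hvw.ne, huw.ne]
  obtain ⟨p, -, hup⟩ := htree.existsUnique_path v w
  have heq := (hup _ hp1).trans (hup _ hp2).symm
  have := congrArg Walk.length heq
  simp at this

/-- Part 2 as a standalone lemma. -/
lemma aux_part2 {V : Type*} (G : SimpleGraph V)
    (htree : G.IsTree) (hnoleaf : ∀ v : V, (G.neighborSet v).Nontrivial) :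
    ∀ (v : V) (σ : Equiv.Perm V), (∀ x y : V, Gᶜ.Adj (σ x) (σ y) ↔ Gᶜ.Adj x y) → σ ≠ 1 →
      ¬ ∀ y ∈ starSet (ofGraph Gᶜ) v, σ y = y := by
  intro v σ hσadj hσne h
  -- σ preserves G-adjacency
  have hG : ∀ x y : V, G.Adj (σ x) (σ y) ↔ G.Adj x y := by
    intro x y
    rcases eq_or_ne x y with rfl | hxy
    · simp
    · have hs : σ x ≠ σ y := fun he => hxy (σ.injective he)
      have := hσadj x y
      simp only [compl_adj, hs, hxy, true_and] at this
      tauto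
  -- σ fixes everything except G-neighbours of v
  have hfix : ∀ y : V, ¬ G.Adj v y → σ y = y := by
    intro y hy
    apply h
    rw [mem_starSet_ofGraph]
    rcases eq_or_ne y v with rfl | hne
    · exact Or.inl rfl
    · exact Or.inr (by rw [compl_adj]; exact ⟨Ne.symm hne, hy⟩)
  have hσv : σ v = v := hfix v (G.loopless.irrefl v)
  obtain ⟨u, hu⟩ : ∃ u : V, σ u ≠ u := by
    by_contra hc
    push_neg at hc
    exact hσne (Equiv.ext hc)
  have hvu : G.Adj v u := by
    by_contra hc
    exact hu (hfix u hc)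
  obtain ⟨w, hwmem, hwv⟩ := (hnoleaf u).exists_ne v
  have huw : G.Adj u w := hwmem
  have hvw_nadj : ¬ G.Adj v w := fun hvw => tree_no_triangle htree hvu huw hvw
  have hσw : σ w = w := hfix w hvw_nadj
  have hvu' : G.Adj v (σ u) := by
    have := (hG v u).mpr hvu
    rwa [hσv] at this
  have hu'w : G.Adj (σ u) w := by
    have := (hG u w).mpr huw
    rwa [hσw] at this
  have hvw : v ≠ w := fun he => hwv he.symm
  exact hu (tree_no_two_paths htree hvu hvu' huw hu'w hvw).symm

end Aux

-- STATEMENT 16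
theorem tree_complement_no_good_sep_set {V : Type*} [Infinite V] (G : SimpleGraph V)
    (htree : G.IsTree) (hnoleaf : ∀ v : V, (G.neighborSet v).Nontrivial) :
    (¬ ∃ S : Set V, IsGoodSepSet (ofGraph Gᶜ) S) ∧
    (∀ (v : V) (σ : Equiv.Perm V), (∀ x y : V, Gᶜ.Adj (σ x) (σ y) ↔ Gᶜ.Adj x y) → σ ≠ 1 →
      ¬ ∀ y ∈ starSet (ofGraph Gᶜ) v, σ y = y) := by
  classical
  refine ⟨?_, aux_part2 G htree hnoleaf⟩
  rintro ⟨S, Γ₁, ⟨hSne, hnconn, C, hΓ₁, hCsub, hCne, hCcne, hclosed⟩, σ, hσne, hσM, hσS⟩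
  have hSsub : S ⊆ Γ₁ := hΓ₁ ▸ Set.subset_union_left
  have hCsubΓ : C ⊆ Γ₁ := hΓ₁ ▸ Set.subset_union_right
  -- σ maps C into C
  have hmapC : ∀ (a : ↥Γ₁), (a : V) ∈ C → ((σ a : ↥Γ₁) : V) ∈ C := by
    intro a ha
    have hmem : ((σ a : ↥Γ₁) : V) ∈ S ∪ C := by rw [← hΓ₁]; exact (σ a).2
    rcases hmem with hS | hC
    · exfalso
      have h1 : σ (σ a) = σ a := hσS _ hS
      have h2 : σ a = a := σ.injective h1
      rw [h2] at hS
      exact hCsub ha hS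
    · exact hC
  set σ' : Equiv.Perm V := σ.extendDomain (Equiv.refl ↥Γ₁) with hσ'def
  have hσ'mem : ∀ x (hx : x ∈ Γ₁), σ' x = ((σ ⟨x, hx⟩ : ↥Γ₁) : V) := fun x hx =>
    Equiv.Perm.extendDomain_apply_subtype σ (Equiv.refl ↥Γ₁) hx
  have hσ'nmem : ∀ x, x ∉ Γ₁ → σ' x = x := fun x hx =>
    Equiv.Perm.extendDomain_apply_not_subtype σ (Equiv.refl ↥Γ₁) hx
  have hσ'S : ∀ x (hx : x ∈ S), σ' x = x := by
    intro x hx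
    rw [hσ'mem x (hSsub hx), hσS ⟨x, hSsub hx⟩ hx]
  -- no edges between C and the outside of Γ₁
  have hM0 : ∀ a ∈ C, ∀ y, y ∉ Γ₁ → ofGraph Gᶜ a y = 0 := by
    intro a ha y hy
    by_contra hne0
    have hay : a ≠ y := fun he => hy (he ▸ hCsubΓ ha)
    have hadj : (cGraph (ofGraph Gᶜ)).Adj a y := ⟨hay, hne0⟩
    have haS : a ∈ Sᶜ := hCsub ha
    have hyS : y ∈ Sᶜ := fun hyS => hy (hSsub hyS)
    have hreach : ((cGraph (ofGraph Gᶜ)).induce Sᶜ).Reachable ⟨a, haS⟩ ⟨y, hyS⟩ :=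
      SimpleGraph.Adj.reachable hadj
    exact hy (hCsubΓ (hclosed _ _ hreach ha))
  -- σ' preserves the weight matrix
  have hM' : ∀ x y : V, ofGraph Gᶜ (σ' x) (σ' y) = ofGraph Gᶜ x y := by
    have key : ∀ x y : V, x ∈ Γ₁ → y ∉ Γ₁ → ofGraph Gᶜ (σ' x) y = ofGraph Gᶜ x y := by
      intro x y hx hy
      rw [hΓ₁] at hx
      rcases hx with hS | hC
      · rw [hσ'S x hS]
      · have hx' : x ∈ Γ₁ := hCsubΓ hC
        rw [hσ'mem x hx', hM0 _ (hmapC ⟨x, hx'⟩ hC) y hy, hM0 x hC y hy]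
    intro x y
    by_cases hx : x ∈ Γ₁ <;> by_cases hy : y ∈ Γ₁
    · rw [hσ'mem x hx, hσ'mem y hy]
      exact hσM ⟨x, hx⟩ ⟨y, hy⟩
    · rw [hσ'nmem y hy]
      exact key x y hx hy
    · rw [hσ'nmem x hx]
      rw [(ofGraph Gᶜ).symmetric x (σ' y), (ofGraph Gᶜ).symmetric x y]
      exact key y x hy hx
    · rw [hσ'nmem x hx, hσ'nmem y hy]
  -- σ' is an automorphism of Gᶜ
  have hadj : ∀ x y : V, Gᶜ.Adj (σ' x) (σ' y) ↔ Gᶜ.Adj x y := by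
    intro x y
    rw [← ofGraph_eq_two_iff, ← ofGraph_eq_two_iff, hM' x y]
  -- σ' is nontrivial
  have hσ'ne : σ' ≠ 1 := by
    obtain ⟨a, ha⟩ : ∃ a : ↥Γ₁, σ a ≠ a := by
      by_contra hc
      push_neg at hc
      exact hσne (Equiv.ext hc)
    intro hone
    apply ha
    have h1 : σ' (a : V) = (a : V) := by rw [hone]; rfl
    rw [hσ'mem (a : V) a.2] at h1
    exact Subtype.ext (by simpa using h1)
  -- take a vertex outside Γ₁
  obtain ⟨v, hvS, hvC⟩ := hCcne
  have hvΓ : v ∉ Γ₁ := by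
    rw [hΓ₁]
    rintro (h | h)
    · exact hvS h
    · exact hvC h
  -- σ' fixes the star of v
  have hstar : ∀ y ∈ starSet (ofGraph Gᶜ) v, σ' y = y := by
    intro y hy
    rw [mem_starSet_ofGraph] at hy
    rcases hy with rfl | hy
    · exact hσ'nmem y hvΓ
    · by_cases hyΓ : y ∈ Γ₁
      · rw [hΓ₁] at hyΓ
        rcases hyΓ with hS | hC
        · exact hσ'S y hS
        · exfalso
          have hadjvy : (cGraph (ofGraph Gᶜ)).Adj v y := (cGraph_ofGraph_adj Gᶜ v y).mpr hy
          have hyS : y ∈ Sᶜ := hCsub hC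
          have hreach : ((cGraph (ofGraph Gᶜ)).induce Sᶜ).Reachable ⟨y, hyS⟩ ⟨v, hvS⟩ :=
            SimpleGraph.Adj.reachable hadjvy.symm
          exact hvC (hclosed _ _ hreach hC)
      · exact hσ'nmem y hyΓ
  exact aux_part2 G htree hnoleaf v σ' hadj hσ'ne hstar
end
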